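/- There is no differentiable surjection from ℝ onto ℝ² (consequence of Morayne's theorem); hence a single differentiable function cannot encode pairs of reals surjectively. -/

import Mathlib

open Set Metric ENNReal

theorem no_differentiable_surjection_R_to_R2 :
    ¬ ∃ f : ℝ → ℝ × ℝ, Differentiable ℝ f ∧ Function.Surjective f := by
  rintro ⟨f, hf, hsurj⟩
  -- decompose ℝ into countably many sets on which f is "locally Lipschitz with constant n+1"
  set E : ℕ → Set ℝ := fun n =>
    {x | ∀ y, dist y x ≤ 1 / (n + 1) → dist (f y) (f x) ≤ (n + 1) * dist y x} with hE
  have hcover : (univ : Set ℝ) = ⋃ n, E n := by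
    refine eq_of_subset_of_subset (fun x _ => ?_) (subset_univ _)
    have h1 : (fun y => f y - f x) =O[nhds x] fun y => y - x :=
      (hf x).hasDerivAt.isBigO_sub
    rcases h1.bound with ⟨c, hc⟩
    rcases Metric.eventually_nhds_iff.1 hc with ⟨ε, hε, hball⟩
    rcases exists_nat_ge c with ⟨n₁, hn₁⟩
    rcases exists_nat_one_div_lt hε with ⟨n₂, hn₂⟩
    refine mem_iUnion.2 ⟨max n₁ n₂, fun y hy => ?_⟩
    have hmax1 : (n₁ : ℝ) ≤ ((max n₁ n₂ : ℕ) : ℝ) := Nat.cast_le.2 (le_max_left n₁ n₂)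
    have hmax2 : (n₂ : ℝ) ≤ ((max n₁ n₂ : ℕ) : ℝ) := Nat.cast_le.2 (le_max_right n₁ n₂)
    have hyx : dist y x < ε := by
      have h2 : (1 : ℝ) / ((max n₁ n₂ : ℕ) + 1) ≤ 1 / (n₂ + 1) :=
        one_div_le_one_div_of_le (by positivity) (by linarith)
      calc dist y x ≤ 1 / ((max n₁ n₂ : ℕ) + 1) := hy
        _ ≤ 1 / (n₂ + 1) := h2
        _ < ε := hn₂
    have hb := hball hyx
    rw [Real.norm_eq_abs] at hb
    calc dist (f y) (f x) = ‖f y - f x‖ := by rw [dist_eq_norm]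
      _ ≤ c * |y - x| := hb
      _ ≤ (((max n₁ n₂ : ℕ) : ℝ) + 1) * |y - x| :=
          mul_le_mul_of_nonneg_right (by linarith) (abs_nonneg _)
      _ = (((max n₁ n₂ : ℕ) : ℝ) + 1) * dist y x := by rw [Real.dist_eq]
  -- f is locally Lipschitz on each E n, so dimH (f '' E n) ≤ dimH (E n) ≤ 1
  have hdim : ∀ n, dimH (f '' E n) ≤ 1 := by
    intro n
    have h1 : dimH (f '' E n) ≤ dimH (E n) := by
      apply dimH_image_le_of_locally_lipschitzOn
      intro x hx
      refine ⟨(n : NNReal) + 1, E n ∩ ball x (1 / (2 * (n + 1))), ?_, ?_⟩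
      · exact inter_mem_nhdsWithin _ (ball_mem_nhds x (by positivity))
      · apply LipschitzOnWith.of_dist_le_mul
        intro z hz y hy
        have hzy : dist z y ≤ 1 / (n + 1) := by
          have ht := dist_triangle z x y
          have h1 := (mem_ball.1 hz.2).le
          have h2 := (mem_ball.1 hy.2).le
          rw [dist_comm x y] at ht
          have heq : (1 : ℝ) / (2 * (n + 1)) + 1 / (2 * (n + 1)) = 1 / (n + 1) := by
            rw [← add_div]
            rw [show (2 : ℝ) * (n + 1) = (n + 1) * 2 by ring, ← div_div, div_right_comm]
            norm_num
          linarith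
        have hlip := hy.1 z hzy
        calc dist (f z) (f y) ≤ ((n : ℝ) + 1) * dist z y := hlip
          _ = (((n : NNReal) + 1 : NNReal) : ℝ) * dist z y := by push_cast; ring
    have h2 : dimH (E n) ≤ 1 := by
      calc dimH (E n) ≤ dimH (univ : Set ℝ) := dimH_mono (subset_univ _)
        _ = 1 := Real.dimH_univ
    exact h1.trans h2
  -- hence dimH of the range is at most 1
  have hrange : dimH (range f) ≤ 1 := by
    rw [← image_univ, hcover, image_iUnion, dimH_iUnion]
    exact iSup_le hdim
  -- but range f = univ has dimension 2
  have h2 : dimH (range f) < (Module.finrank ℝ (ℝ × ℝ) : ENNReal) := by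
    have hfr : (Module.finrank ℝ (ℝ × ℝ) : ENNReal) = 2 := by
      rw [show Module.finrank ℝ (ℝ × ℝ) = 2 by simp]
      norm_num
    rw [hfr]
    exact lt_of_le_of_lt hrange (by norm_num)
  have hdense : Dense (range f)ᶜ := dense_compl_of_dimH_lt_finrank h2
  rw [Function.Surjective.range_eq hsurj, compl_univ] at hdense
  have h3 := hdense.closure_eq
  rw [closure_empty] at h3
  exact (Set.empty_ne_univ (α := ℝ × ℝ)) h3
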